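/- Let ρ₁, ρ₂, ρ₃ be complex numbers with ρ₁ + ρ₂ + ρ₃ = 0. Then 12·(Im(ρ₁·conj(ρ₂)))² ≤ (|ρ₁|² + |ρ₂|² + |ρ₃|²)², with equality if and only if |ρ₁| = |ρ₂| = |ρ₃|. -/

import Mathlib

/-- The adimensional radiation parameter satisfies `κ̄² ≤ 1/3`:
`12 (Im(ρ₁·conj ρ₂))² ≤ (Σ|ρᵢ|²)²`, with equality iff `|ρ₁| = |ρ₂| = |ρ₃|`
(type IM^{-6}, the 'most radiative' type I case). -/
theorem radiation_parameter_bound (ρ₁ ρ₂ ρ₃ : ℂ) (hsum : ρ₁ + ρ₂ + ρ₃ = 0) :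
    12 * (ρ₁ * (starRingEnd ℂ) ρ₂).im ^ 2 ≤
      (‖ρ₁‖ ^ 2 + ‖ρ₂‖ ^ 2 + ‖ρ₃‖ ^ 2) ^ 2 ∧
    (12 * (ρ₁ * (starRingEnd ℂ) ρ₂).im ^ 2 =
        (‖ρ₁‖ ^ 2 + ‖ρ₂‖ ^ 2 + ‖ρ₃‖ ^ 2) ^ 2 ↔
      (‖ρ₁‖ = ‖ρ₂‖ ∧ ‖ρ₂‖ = ‖ρ₃‖)) := by
  have hρ₃ : ρ₃ = -ρ₁ - ρ₂ := by linear_combination hsum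
  subst hρ₃
  set a := ρ₁.re with ha
  set b := ρ₁.im with hb
  set c := ρ₂.re with hc
  set d := ρ₂.im with hd
  have h1 : ‖ρ₁‖ ^ 2 = a ^ 2 + b ^ 2 := by
    rw [Complex.sq_norm, Complex.normSq_apply]; ring
  have h2 : ‖ρ₂‖ ^ 2 = c ^ 2 + d ^ 2 := by
    rw [Complex.sq_norm, Complex.normSq_apply]; ring
  have h3 : ‖-ρ₁ - ρ₂‖ ^ 2 = (a + c) ^ 2 + (b + d) ^ 2 := by
    rw [Complex.sq_norm, Complex.normSq_apply]
    simp [Complex.sub_re, Complex.sub_im, Complex.neg_re, Complex.neg_im, ← ha, ← hb, ← hc, ← hd]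
    ring
  have him : (ρ₁ * (starRingEnd ℂ) ρ₂).im = b * c - a * d := by
    simp [Complex.mul_im, ← ha, ← hb, ← hc, ← hd]
    ring
  rw [h1, h2, h3, him]
  set t1 : ℝ := a ^ 2 + b ^ 2 with ht1
  set t2 : ℝ := c ^ 2 + d ^ 2 with ht2
  set t3 : ℝ := (a + c) ^ 2 + (b + d) ^ 2 with ht3
  have key : (t1 + t2 + t3) ^ 2 - 12 * (b * c - a * d) ^ 2 =
      2 * ((t1 - t2) ^ 2 + (t2 - t3) ^ 2 + (t1 - t3) ^ 2) := by
    rw [ht1, ht2, ht3]; ring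
  constructor
  · nlinarith [sq_nonneg (t1 - t2), sq_nonneg (t2 - t3), sq_nonneg (t1 - t3)]
  · constructor
    · intro heq
      have hzero : (t1 - t2) ^ 2 + (t2 - t3) ^ 2 + (t1 - t3) ^ 2 = 0 := by linarith
      have s12 : (t1 - t2) ^ 2 = 0 := by
        linarith [sq_nonneg (t1 - t2), sq_nonneg (t2 - t3), sq_nonneg (t1 - t3)]
      have s23 : (t2 - t3) ^ 2 = 0 := by
        linarith [sq_nonneg (t1 - t2), sq_nonneg (t2 - t3), sq_nonneg (t1 - t3)]
      have e12 : t1 = t2 := by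
        have := pow_eq_zero_iff (two_ne_zero) |>.mp s12; linarith
      have e23 : t2 = t3 := by
        have := pow_eq_zero_iff (two_ne_zero) |>.mp s23; linarith
      have habs1 : ‖ρ₁‖ = ‖ρ₂‖ := by
        have h := h1.trans (e12.trans h2.symm)
        have := congrArg Real.sqrt h
        rwa [Real.sqrt_sq (norm_nonneg _), Real.sqrt_sq (norm_nonneg _)] at this
      have habs2 : ‖ρ₂‖ = ‖-ρ₁ - ρ₂‖ := by
        have h := h2.trans (e23.trans h3.symm)
        have := congrArg Real.sqrt h
        rwa [Real.sqrt_sq (norm_nonneg _), Real.sqrt_sq (norm_nonneg _)] at this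
      exact ⟨habs1, habs2⟩
    · rintro ⟨e1, e2⟩
      have e12 : t1 = t2 := by rw [← h1, ← h2, e1]
      have e23 : t2 = t3 := by rw [← h2, ← h3, e2]
      have z1 : (t1 - t2) ^ 2 = 0 := by rw [e12]; ring
      have z2 : (t2 - t3) ^ 2 = 0 := by rw [e23]; ring
      have z3 : (t1 - t3) ^ 2 = 0 := by rw [e12, e23]; ring
      linarith
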